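/- For τ ∈ (0, 1/4), let a₁ < b₁ be the two real roots of q₁ and b_* = (3(1−4τ))^{−1/3}. For every real x with a₁ < x < b₁, the cubic polynomial u³ − R(x)u + D(x) has exactly one real root and a pair of nonreal complex-conjugate roots. For every real x with x < a₁ or x > b₁ and x ≠ b_*, the cubic u³ − R(x)u + D(x) has three distinct real roots. -/

import Mathlib

noncomputable section

/-- The constant `c = −(243(1−4τ)²/64)^{1/3}` (real cube root). -/
def ccf (τ : ℝ) : ℝ := -(243 * (1 - 4 * τ) ^ 2 / 64) ^ ((1 : ℝ) / 3)

/-- `R(z) = 3z⁴ − 3z − c`. -/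
def RR (τ : ℝ) (z : ℂ) : ℂ := 3 * z ^ 4 - 3 * z - (ccf τ : ℂ)

/-- `D(z) = −2z⁶ + 3z³ + cz² − 3τ`. -/
def DD (τ : ℝ) (z : ℂ) : ℂ :=
  -2 * z ^ 6 + 3 * z ^ 3 + (ccf τ : ℂ) * z ^ 2 - 3 * (τ : ℂ)

/-- The quartic `q₁`. -/
def q1 (τ : ℝ) (z : ℂ) : ℂ :=
  ((256 / (3 : ℝ) ^ ((5 : ℝ) / 3) * (1 - 4 * τ) ^ ((1 : ℝ) / 3) : ℝ) : ℂ) * z ^ 4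
    + (128 / 9 : ℂ) * z ^ 3
    + ((16 / (3 : ℝ) ^ ((1 : ℝ) / 3) * (1 - 4 * τ) ^ ((2 : ℝ) / 3) : ℝ) : ℂ) * z ^ 2
    - ((32 * (3 : ℝ) ^ ((1 : ℝ) / 3) * (1 - 4 * τ) ^ ((1 : ℝ) / 3) : ℝ) : ℂ) * z
    + ((16 * (1 - 8 * τ) : ℝ) : ℂ)

/-- The linear factor `q₂`. -/
def q2 (τ : ℝ) (z : ℂ) : ℂ :=
  (((3 : ℝ) ^ ((1 : ℝ) / 3) * (1 - 4 * τ) ^ ((1 : ℝ) / 3) : ℝ) : ℂ) * z - 1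

/-- The double point `b_* = (3(1−4τ))^{−1/3}`. -/
def bstar (τ : ℝ) : ℝ := (3 * (1 - 4 * τ)) ^ (-(1 : ℝ) / 3)

/-! ### Auxiliary material -/

/-- every depressed real cubic has a real root -/
lemma cubic_has_real_root (p q : ℝ) : ∃ r : ℝ, r ^ 3 - p * r + q = 0 := by
  set f : ℝ → ℝ := fun r => r ^ 3 - p * r + q with hf
  have hc : Continuous f := by fun_prop
  set M : ℝ := |p| + |q| + 1 with hM
  have hM1 : 1 ≤ M := by have := abs_nonneg p; have := abs_nonneg q; linarith
  have h1 : f (-M) ≤ 0 := by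
    simp only [hf]
    nlinarith [le_abs_self p, le_abs_self q, neg_abs_le p, neg_abs_le q,
      abs_nonneg p, abs_nonneg q, sq_nonneg M, sq_nonneg (M - 1)]
  have h2 : 0 ≤ f M := by
    simp only [hf]
    nlinarith [le_abs_self p, le_abs_self q, neg_abs_le p, neg_abs_le q,
      abs_nonneg p, abs_nonneg q, sq_nonneg M, sq_nonneg (M - 1)]
  have hmem : (0 : ℝ) ∈ Set.Icc (f (-M)) (f M) := ⟨h1, h2⟩
  have := intermediate_value_Icc (by linarith : -M ≤ M) hc.continuousOn hmem
  obtain ⟨r, _, hr⟩ := this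
  exact ⟨r, hr⟩

/-- negative discriminant: one real root and a conjugate pair -/
lemma cubic_one_real (p q : ℝ) (h : 4 * p ^ 3 - 27 * q ^ 2 < 0) :
    ∃ (r : ℝ) (w : ℂ), w.im ≠ 0 ∧
      ∀ u : ℂ, u ^ 3 - (p : ℂ) * u + (q : ℂ)
        = (u - (r : ℂ)) * (u - w) * (u - (starRingEnd ℂ) w) := by
  obtain ⟨r, hr⟩ := cubic_has_real_root p q
  have hid : 4 * p ^ 3 - 27 * q ^ 2 = (4 * p - 3 * r ^ 2) * (3 * r ^ 2 - p) ^ 2 := by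
    linear_combination (27 * r ^ 3 - 27 * q - 27 * p * r) * hr
  have hd : 0 < 3 * r ^ 2 - 4 * p := by nlinarith [sq_nonneg (3 * r ^ 2 - p)]
  set s : ℝ := Real.sqrt (3 * r ^ 2 - 4 * p) with hs
  have hs2 : s ^ 2 = 3 * r ^ 2 - 4 * p := Real.sq_sqrt hd.le
  have hspos : 0 < s := Real.sqrt_pos.mpr hd
  refine ⟨r, (-(r : ℂ) + (s : ℂ) * Complex.I) / 2, ?_, ?_⟩
  · simp [Complex.div_im]
    intro habs
    · linarith
  · intro u
    have hconj : (starRingEnd ℂ) ((-(r : ℂ) + (s : ℂ) * Complex.I) / 2)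
        = (-(r : ℂ) - (s : ℂ) * Complex.I) / 2 := by
      simp [map_div₀, Complex.conj_I, map_ofNat]
      ring
    rw [hconj]
    have hrC : (r : ℂ) ^ 3 - (p : ℂ) * r + q = 0 := by exact_mod_cast congrArg Complex.ofReal hr
    have hs2C : (s : ℂ) ^ 2 = 3 * (r : ℂ) ^ 2 - 4 * p := by exact_mod_cast congrArg Complex.ofReal hs2
    have hI : (Complex.I) ^ 2 = -1 := Complex.I_sq
    linear_combination hrC - (u - (r : ℂ)) / 4 * hs2C + (u - (r : ℂ)) * (s : ℂ) ^ 2 / 4 * hI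

/-- positive discriminant: three distinct real roots -/
lemma cubic_three_real (p q : ℝ) (h : 0 < 4 * p ^ 3 - 27 * q ^ 2) :
    ∃ r₁ r₂ r₃ : ℝ, r₁ ≠ r₂ ∧ r₁ ≠ r₃ ∧ r₂ ≠ r₃ ∧
      ∀ u : ℂ, u ^ 3 - (p : ℂ) * u + (q : ℂ)
        = (u - (r₁ : ℂ)) * (u - (r₂ : ℂ)) * (u - (r₃ : ℂ)) := by
  obtain ⟨r, hr⟩ := cubic_has_real_root p q
  have hid : 4 * p ^ 3 - 27 * q ^ 2 = (4 * p - 3 * r ^ 2) * (3 * r ^ 2 - p) ^ 2 := by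
    linear_combination (27 * r ^ 3 - 27 * q - 27 * p * r) * hr
  have hd : 0 < 4 * p - 3 * r ^ 2 := by nlinarith [sq_nonneg (3 * r ^ 2 - p)]
  set s : ℝ := Real.sqrt (4 * p - 3 * r ^ 2) with hs
  have hs2 : s ^ 2 = 4 * p - 3 * r ^ 2 := Real.sq_sqrt hd.le
  have hspos : 0 < s := Real.sqrt_pos.mpr hd
  have h3 : (3 * r ^ 2 - p) ≠ 0 := by
    intro h0
    rw [h0] at hid
    simp at hid
    linarith
  have hprod : (r - (-r + s) / 2) * (r - (-r - s) / 2) = 3 * r ^ 2 - p := by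
    linear_combination -hs2 / 4
  refine ⟨r, (-r + s) / 2, (-r - s) / 2, ?_, ?_, ?_, ?_⟩
  · intro he
    apply h3
    rw [← hprod, ← he]
    ring
  · intro he
    apply h3
    rw [← hprod, ← he]
    ring
  · intro he
    have : s = 0 := by linarith [sub_eq_zero.mpr he]
    linarith
  · intro u
    have hrC : (r : ℂ) ^ 3 - (p : ℂ) * r + q = 0 := by exact_mod_cast congrArg Complex.ofReal hr
    have hs2C : (s : ℂ) ^ 2 = 4 * (p : ℂ) - 3 * (r : ℂ) ^ 2 := by
      exact_mod_cast congrArg Complex.ofReal hs2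
    push_cast
    linear_combination hrC + (u - (r : ℂ)) / 4 * hs2C

/-- the real cube root, as used in the statement -/
def ee (τ : ℝ) : ℝ := (3 : ℝ) ^ ((1 : ℝ) / 3) * (1 - 4 * τ) ^ ((1 : ℝ) / 3)

/-- the real quartic `q₁`, written in terms of `e = ee τ` -/
def q1e (τ e x : ℝ) : ℝ :=
  256 / 9 * e * x ^ 4 + 128 / 9 * x ^ 3 + 16 / 3 * e ^ 2 * x ^ 2 - 32 * e * x + 16 * (1 - 8 * τ)

lemma cube_rt (a : ℝ) (ha : 0 ≤ a) : (a ^ ((1 : ℝ) / 3)) ^ 3 = a := by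
  rw [one_div]
  exact_mod_cast Real.rpow_inv_natCast_pow ha (by norm_num : (3:ℕ) ≠ 0)

section
variable {τ : ℝ} (hm : 0 < 1 - 4 * τ)
include hm

lemma ee_pos : 0 < ee τ :=
  mul_pos (Real.rpow_pos_of_pos (by norm_num) _) (Real.rpow_pos_of_pos hm _)

lemma ee_cube : ee τ ^ 3 = 3 * (1 - 4 * τ) := by
  rw [ee, mul_pow, cube_rt 3 (by norm_num), cube_rt _ hm.le]

set_option linter.unusedSectionVars false in
lemma coeffA : 256 / (3 : ℝ) ^ ((5 : ℝ) / 3) * (1 - 4 * τ) ^ ((1 : ℝ) / 3)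
    = 256 / 9 * ee τ := by
  have h1 : (3 : ℝ) ^ ((5 : ℝ) / 3) * (3 : ℝ) ^ ((1 : ℝ) / 3) = 9 := by
    rw [← Real.rpow_add (by norm_num : (0:ℝ) < 3)]
    norm_num
  have h2 : (0:ℝ) < (3 : ℝ) ^ ((5 : ℝ) / 3) := Real.rpow_pos_of_pos (by norm_num) _
  rw [ee]
  field_simp
  linear_combination -h1

lemma coeffB : 16 / (3 : ℝ) ^ ((1 : ℝ) / 3) * (1 - 4 * τ) ^ ((2 : ℝ) / 3)
    = 16 / 3 * ee τ ^ 2 := by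
  have h23 : (1 - 4 * τ) ^ ((2 : ℝ) / 3) = ((1 - 4 * τ) ^ ((1 : ℝ) / 3)) ^ 2 := by
    rw [← Real.rpow_natCast ((1 - 4*τ) ^ ((1:ℝ)/3)) 2, ← Real.rpow_mul hm.le]
    norm_num
  have h1 : ((3:ℝ) ^ ((1 : ℝ) / 3)) ^ 3 = 3 := cube_rt 3 (by norm_num)
  have h2 : (0:ℝ) < (3 : ℝ) ^ ((1 : ℝ) / 3) := Real.rpow_pos_of_pos (by norm_num) _
  rw [ee, h23, mul_pow]
  field_simp
  linear_combination -h1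

lemma hccf : ccf τ = -(3 / 4) * ee τ ^ 2 := by
  have hbase : (0:ℝ) ≤ 243 * (1 - 4 * τ) ^ 2 / 64 := by positivity
  have hmono : StrictMono fun x : ℝ => x ^ 3 := Odd.strictMono_pow (by decide)
  have key : (243 * (1 - 4 * τ) ^ 2 / 64) ^ ((1:ℝ)/3) = (3 / 4) * ee τ ^ 2 := by
    apply hmono.injective
    show ((243 * (1 - 4 * τ) ^ 2 / 64) ^ ((1:ℝ)/3)) ^ 3 = ((3 / 4) * ee τ ^ 2) ^ 3
    rw [cube_rt _ hbase]
    nlinarith [ee_cube hm]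
  rw [ccf, key]
  ring

lemma hbstar : bstar τ = (ee τ)⁻¹ := by
  rw [bstar, ee, neg_div, Real.rpow_neg (by nlinarith : (0:ℝ) ≤ 3 * (1 - 4*τ)),
    Real.mul_rpow (by norm_num) hm.le]

lemma q1_cast (x : ℝ) : q1 τ ((x : ℝ) : ℂ) = ((q1e τ (ee τ) x : ℝ) : ℂ) := by
  have hc3 : (32 * (3:ℝ)^((1:ℝ)/3) * (1-4*τ)^((1:ℝ)/3)) = 32 * ee τ := by
    rw [ee]; ring
  rw [q1, q1e, coeffA hm, coeffB hm, hc3]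
  push_cast
  ring

lemma RR_cast (x : ℝ) :
    RR τ ((x : ℝ) : ℂ) = (((3 * x ^ 4 - 3 * x + 3 / 4 * ee τ ^ 2 : ℝ)) : ℂ) := by
  rw [RR, hccf hm]
  push_cast
  ring

lemma DD_cast (x : ℝ) :
    DD τ ((x : ℝ) : ℂ) =
      (((-2 * x ^ 6 + 3 * x ^ 3 - 3 / 4 * ee τ ^ 2 * x ^ 2 - 3 * τ : ℝ)) : ℂ) := by
  rw [DD, hccf hm]
  push_cast
  ring

end

/-- a quartic with positive leading coefficient is eventually positive on the right -/
lemma quartic_tail_pos (A b c d e : ℝ) (hA : 0 < A) (M : ℝ) :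
    ∃ X, M < X ∧ 0 < A * X ^ 4 + b * X ^ 3 + c * X ^ 2 + d * X + e := by
  set S : ℝ := |b| + |c| + |d| + |e| with hS
  have hS0 : 0 ≤ S := by positivity
  set X : ℝ := S / A + |M| + 1 with hX
  have hdiv : 0 ≤ S / A := by positivity
  have habsM : 0 ≤ |M| := abs_nonneg M
  have hX1 : 1 ≤ X := by rw [hX]; linarith
  have hX0 : 0 < X := lt_of_lt_of_le one_pos hX1
  refine ⟨X, ?_, ?_⟩
  · calc M ≤ |M| := le_abs_self M
      _ < X := by rw [hX]; linarith [div_nonneg hS0 hA.le]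
  · have h3 : (0:ℝ) < X ^ 3 := by positivity
    have hX23 : X ^ 2 ≤ X ^ 3 := by nlinarith
    have hX13 : X ≤ X ^ 3 := by nlinarith
    have hX03 : 1 ≤ X ^ 3 := by nlinarith
    have hAX : A * X = S + A * (|M| + 1) := by
      rw [hX]; field_simp; ring
    have hb : -|b| * X ^ 3 ≤ b * X ^ 3 := mul_le_mul_of_nonneg_right (neg_abs_le b) h3.le
    have hc : -|c| * X ^ 3 ≤ c * X ^ 2 := by nlinarith [neg_abs_le c, abs_nonneg c, sq_nonneg X]
    have hd : -|d| * X ^ 3 ≤ d * X := by nlinarith [neg_abs_le d, abs_nonneg d]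
    have he : -|e| * X ^ 3 ≤ e := by nlinarith [neg_abs_le e, abs_nonneg e]
    have hlead : A * X ^ 4 = (S + A * (|M| + 1)) * X ^ 3 := by
      rw [← hAX]; ring
    nlinarith [mul_pos (mul_pos hA (by linarith : (0:ℝ) < |M| + 1)) h3]

/-- a quartic with positive leading coefficient is eventually positive on the left -/
lemma quartic_tail_neg (A b c d e : ℝ) (hA : 0 < A) (M : ℝ) :
    ∃ X, X < M ∧ 0 < A * X ^ 4 + b * X ^ 3 + c * X ^ 2 + d * X + e := by
  obtain ⟨Y, hY1, hY2⟩ := quartic_tail_pos A (-b) c (-d) e hA (-M)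
  refine ⟨-Y, by linarith, ?_⟩
  have : A * (-Y) ^ 4 + b * (-Y) ^ 3 + c * (-Y) ^ 2 + d * (-Y) + e
      = A * Y ^ 4 + -b * Y ^ 3 + c * Y ^ 2 + -d * Y + e := by ring
  rw [this]
  exact hY2

/-- For `τ ∈ (0,1/4)` with `a₁ < b₁` the two real roots of `q₁`: for real
`x ∈ (a₁, b₁)` the cubic `u³ − R(x)u + D(x)` has exactly one real root and a pair of nonreal
complex-conjugate roots, while for real `x` with `x < a₁` or `x > b₁`, and `x ≠ b_*`, it has
three distinct real roots. -/
theorem real_roots_of_cubic (τ a₁ b₁ : ℝ) (hτ : τ ∈ Set.Ioo (0 : ℝ) (1 / 4))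
    (hab : a₁ < b₁) (ha : q1 τ ((a₁ : ℝ) : ℂ) = 0) (hb : q1 τ ((b₁ : ℝ) : ℂ) = 0)
    (honly : ∀ x : ℝ, q1 τ ((x : ℝ) : ℂ) = 0 → x = a₁ ∨ x = b₁) :
    (∀ x : ℝ, a₁ < x → x < b₁ →
      ∃ (r : ℝ) (w : ℂ), w.im ≠ 0 ∧
        ∀ u : ℂ, u ^ 3 - RR τ ((x : ℝ) : ℂ) * u + DD τ ((x : ℝ) : ℂ)
          = (u - (r : ℂ)) * (u - w) * (u - (starRingEnd ℂ) w)) ∧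
    (∀ x : ℝ, (x < a₁ ∨ b₁ < x) → x ≠ bstar τ →
      ∃ r₁ r₂ r₃ : ℝ, r₁ ≠ r₂ ∧ r₁ ≠ r₃ ∧ r₂ ≠ r₃ ∧
        ∀ u : ℂ, u ^ 3 - RR τ ((x : ℝ) : ℂ) * u + DD τ ((x : ℝ) : ℂ)
          = (u - (r₁ : ℂ)) * (u - (r₂ : ℂ)) * (u - (r₃ : ℂ))) := by
  obtain ⟨hτ0, hτ4⟩ := hτ
  have hm : 0 < 1 - 4 * τ := by linarith
  have hEpos : 0 < ee τ := ee_pos hm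
  have hEne : ee τ ≠ 0 := ne_of_gt hEpos
  have hEcube : ee τ ^ 3 = 3 * (1 - 4 * τ) := ee_cube hm
  set F : ℝ → ℝ := fun x => q1e τ (ee τ) x with hF
  have hFcont : Continuous F := by
    simp only [hF, q1e]
    fun_prop
  have hFroot : ∀ x : ℝ, F x = 0 → x = a₁ ∨ x = b₁ := by
    intro x hx
    apply honly x
    rw [q1_cast hm x]
    exact_mod_cast congrArg Complex.ofReal hx
  have hFa : F a₁ = 0 := by
    have := ha
    rw [q1_cast hm a₁] at this
    exact_mod_cast this
  have hFb : F b₁ = 0 := by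
    have := hb
    rw [q1_cast hm b₁] at this
    exact_mod_cast this
  -- tails
  have hA : 0 < 256 / 9 * ee τ := by positivity
  have tailR : ∀ M : ℝ, ∃ X, M < X ∧ 0 < F X := by
    intro M
    obtain ⟨X, h1, h2⟩ := quartic_tail_pos (256 / 9 * ee τ) (128 / 9) (16 / 3 * ee τ ^ 2)
      (-(32 * ee τ)) (16 * (1 - 8 * τ)) hA M
    refine ⟨X, h1, ?_⟩
    have : F X = 256 / 9 * ee τ * X ^ 4 + 128 / 9 * X ^ 3 + 16 / 3 * ee τ ^ 2 * X ^ 2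
        + -(32 * ee τ) * X + 16 * (1 - 8 * τ) := by simp only [hF, q1e]; ring
    rw [this]; exact h2
  have tailL : ∀ M : ℝ, ∃ X, X < M ∧ 0 < F X := by
    intro M
    obtain ⟨X, h1, h2⟩ := quartic_tail_neg (256 / 9 * ee τ) (128 / 9) (16 / 3 * ee τ ^ 2)
      (-(32 * ee τ)) (16 * (1 - 8 * τ)) hA M
    refine ⟨X, h1, ?_⟩
    have : F X = 256 / 9 * ee τ * X ^ 4 + 128 / 9 * X ^ 3 + 16 / 3 * ee τ ^ 2 * X ^ 2
        + -(32 * ee τ) * X + 16 * (1 - 8 * τ) := by simp only [hF, q1e]; ring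
    rw [this]; exact h2
  -- intermediate value helpers
  have ivt : ∀ x y : ℝ, x < y → 0 < F x → F y < 0 → ∃ z, x < z ∧ z < y ∧ F z = 0 := by
    intro x y hxy hx hy
    have h0 : (0:ℝ) ∈ Set.Ioo (F y) (F x) := ⟨hy, hx⟩
    have := intermediate_value_Ioo' hxy.le hFcont.continuousOn h0
    obtain ⟨z, hz, hz0⟩ := this
    exact ⟨z, hz.1, hz.2, hz0⟩
  have ivt' : ∀ x y : ℝ, x < y → F x < 0 → 0 < F y → ∃ z, x < z ∧ z < y ∧ F z = 0 := by
    intro x y hxy hx hy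
    have h0 : (0:ℝ) ∈ Set.Ioo (F x) (F y) := ⟨hx, hy⟩
    have := intermediate_value_Ioo hxy.le hFcont.continuousOn h0
    obtain ⟨z, hz, hz0⟩ := this
    exact ⟨z, hz.1, hz.2, hz0⟩
  -- the interior witness point
  set x₀ : ℝ := ee τ ^ 2 / 4 with hx₀
  have hx₀neg : F x₀ < 0 := by
    have hval : F x₀ = 3 * (1 - 4 * τ) ^ 3 + 5 * (1 - 4 * τ) ^ 2 + 8 * (1 - 4 * τ) - 16 := by
      simp only [hF, q1e, hx₀]
      linear_combination ((ee τ ^ 6 + 3 * (1 - 4 * τ) * ee τ ^ 3 + 9 * (1 - 4 * τ) ^ 2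
        + 5 * ee τ ^ 3 + 15 * (1 - 4 * τ) - 72) / 9) * hEcube
    rw [hval]
    nlinarith [hm, hτ0, sq_nonneg (1 - 4 * τ)]
  have hax₀ : a₁ < x₀ := by
    by_contra hcon
    push_neg at hcon
    have hne : x₀ ≠ a₁ := by
      intro h
      rw [h, hFa] at hx₀neg
      exact lt_irrefl 0 hx₀neg
    have hlt : x₀ < a₁ := lt_of_le_of_ne hcon hne
    obtain ⟨X, hX1, hX2⟩ := tailL x₀
    obtain ⟨z, hz1, hz2, hz3⟩ := ivt X x₀ hX1 hX2 hx₀neg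
    rcases hFroot z hz3 with h | h <;> linarith
  have hx₀b : x₀ < b₁ := by
    by_contra hcon
    push_neg at hcon
    have hne : x₀ ≠ b₁ := by
      intro h
      rw [h, hFb] at hx₀neg
      exact lt_irrefl 0 hx₀neg
    have hlt : b₁ < x₀ := lt_of_le_of_ne hcon (Ne.symm hne)
    obtain ⟨X, hX1, hX2⟩ := tailR x₀
    obtain ⟨z, hz1, hz2, hz3⟩ := ivt' x₀ X hX1 hx₀neg hX2
    rcases hFroot z hz3 with h | h <;> linarith
  -- sign of F inside
  have hInside : ∀ x : ℝ, a₁ < x → x < b₁ → F x < 0 := by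
    intro x h1 h2
    have hxne : F x ≠ 0 := by
      intro h0
      rcases hFroot x h0 with h | h <;> simp [h] at h1 h2
    rcases lt_trichotomy x x₀ with h | h | h
    · by_contra hge
      push_neg at hge
      have hpos : 0 < F x := lt_of_le_of_ne hge (Ne.symm hxne)
      obtain ⟨z, hz1, hz2, hz3⟩ := ivt x x₀ h hpos hx₀neg
      rcases hFroot z hz3 with hzz | hzz <;> linarith
    · rwa [h]
    · by_contra hge
      push_neg at hge
      have hpos : 0 < F x := lt_of_le_of_ne hge (Ne.symm hxne)
      obtain ⟨z, hz1, hz2, hz3⟩ := ivt' x₀ x h hx₀neg hpos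
      rcases hFroot z hz3 with hzz | hzz <;> linarith
  -- sign of F outside
  have hOutside : ∀ x : ℝ, (x < a₁ ∨ b₁ < x) → 0 < F x := by
    intro x hx
    have hxne : F x ≠ 0 := by
      intro h0
      rcases hFroot x h0 with h | h <;> rcases hx with h' | h' <;> linarith [hab]
    by_contra hge
    push_neg at hge
    have hneg : F x < 0 := lt_of_le_of_ne hge hxne
    rcases hx with h' | h'
    · obtain ⟨X, hX1, hX2⟩ := tailL x
      obtain ⟨z, hz1, hz2, hz3⟩ := ivt X x hX1 hX2 hneg
      rcases hFroot z hz3 with h | h <;> linarith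
    · obtain ⟨X, hX1, hX2⟩ := tailR x
      obtain ⟨z, hz1, hz2, hz3⟩ := ivt' x X hX1 hneg hX2
      rcases hFroot z hz3 with h | h <;> linarith
  -- F at bstar is nonnegative
  have hbst : bstar τ = (ee τ)⁻¹ := hbstar hm
  have hEinv : ee τ * (ee τ)⁻¹ = 1 := mul_inv_cancel₀ hEne
  have hFbstar : 0 ≤ F (bstar τ) := by
    have h9 : F (bstar τ) * (3 * ee τ ^ 3) = 32 * (3 * (1 - 4 * τ) - 2) ^ 2 := by
      rw [hbst]
      simp only [hF, q1e]
      linear_combination (128 + 128 * ee τ * (ee τ)⁻¹ + 128 * ee τ ^ 2 * ((ee τ)⁻¹) ^ 2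
        - 80 * ee τ ^ 3 + 256 / 3 * ee τ ^ 3 * ((ee τ)⁻¹) ^ 3
        + 16 * ee τ ^ 4 * (ee τ)⁻¹) * hEinv + (-32 - 384 * τ) * hEcube
    nlinarith [sq_nonneg (3 * (1 - 4 * τ) - 2), pow_pos hEpos 3, h9]
  -- the discriminant identity
  have hdisc : ∀ x : ℝ,
      4 * (3 * x ^ 4 - 3 * x + 3 / 4 * ee τ ^ 2) ^ 3
        - 27 * (-2 * x ^ 6 + 3 * x ^ 3 - 3 / 4 * ee τ ^ 2 * x ^ 2 - 3 * τ) ^ 2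
      = 243 / 256 * F x * (ee τ * x - 1) ^ 2 := by
    intro x
    simp only [hF, q1e]
    linear_combination (81 / 16 - 81 / 4 * τ + 27 / 16 * ee τ ^ 3 - 81 / 4 * x * ee τ
      + 81 / 2 * x ^ 3 - 27 * x ^ 6) * hEcube
  constructor
  · -- interior
    intro x h1 h2
    have hFx : F x < 0 := hInside x h1 h2
    have hxbst : x ≠ bstar τ := by
      intro h
      rw [h] at hFx
      linarith [hFbstar]
    have hq2ne : ee τ * x - 1 ≠ 0 := by
      intro h0
      apply hxbst
      rw [hbst]
      field_simp
      linear_combination h0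
    have hq2sq : 0 < (ee τ * x - 1) ^ 2 := by positivity
    have hneg : 4 * (3 * x ^ 4 - 3 * x + 3 / 4 * ee τ ^ 2) ^ 3
        - 27 * (-2 * x ^ 6 + 3 * x ^ 3 - 3 / 4 * ee τ ^ 2 * x ^ 2 - 3 * τ) ^ 2 < 0 := by
      rw [hdisc x]
      nlinarith [hFx, hq2sq]
    obtain ⟨r, w, hw, hfac⟩ := cubic_one_real _ _ hneg
    refine ⟨r, w, hw, fun u => ?_⟩
    rw [RR_cast hm x, DD_cast hm x]
    exact hfac u
  · -- exterior
    intro x hx hxbst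
    have hFx : 0 < F x := hOutside x hx
    have hq2ne : ee τ * x - 1 ≠ 0 := by
      intro h0
      apply hxbst
      rw [hbst]
      field_simp
      linear_combination h0
    have hq2sq : 0 < (ee τ * x - 1) ^ 2 := by positivity
    have hpos : 0 < 4 * (3 * x ^ 4 - 3 * x + 3 / 4 * ee τ ^ 2) ^ 3
        - 27 * (-2 * x ^ 6 + 3 * x ^ 3 - 3 / 4 * ee τ ^ 2 * x ^ 2 - 3 * τ) ^ 2 := by
      rw [hdisc x]
      nlinarith [hFx, hq2sq]
    obtain ⟨r₁, r₂, r₃, h12, h13, h23, hfac⟩ := cubic_three_real _ _ hpos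
    refine ⟨r₁, r₂, r₃, h12, h13, h23, fun u => ?_⟩
    rw [RR_cast hm x, DD_cast hm x]
    exact hfac u
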